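/- With p as above, p satisfies p(r²/conj(z)) + conj(p(z)) = −1/z₀ − 1/conj(z₀) for all z in its domain; in particular Re p(z) = Re(−1/z₀) on the circle |z| = r. -/

import Mathlib

open Set Complex

/-- The constant `C = ∏_{k=1}^∞ (1 − r^{2k})`. -/
noncomputable def thetaConst (r : ℝ) : ℂ := ∏' k : ℕ, (1 - (r : ℂ) ^ (2 * (k + 1)))

/-- The annular Jacobi theta function
`ϑ₁(z) = C (1 − 1/z) ∏_{k=1}^∞ (1 − r^{2k} z)(1 − r^{2k}/z)`. -/
noncomputable def theta1 (r : ℝ) (z : ℂ) : ℂ :=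
  thetaConst r * (1 - 1 / z) *
    ∏' k : ℕ, ((1 - (r : ℂ) ^ (2 * (k + 1)) * z) * (1 - (r : ℂ) ^ (2 * (k + 1)) / z))

/-- `p(z) = z ϑ₁'(z̄₀ z)/ϑ₁(z̄₀ z) − ϑ₁'(z₀/z)/(z ϑ₁(z₀/z))`. -/
noncomputable def pfun (r : ℝ) (z₀ z : ℂ) : ℂ :=
  z * deriv (theta1 r) ((starRingEnd ℂ) z₀ * z) / theta1 r ((starRingEnd ℂ) z₀ * z)
    - deriv (theta1 r) (z₀ / z) / (z * theta1 r (z₀ / z))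

namespace Stmt14Aux

open Filter Topology

/-- The factor `r^{2(k+1)}`. -/
noncomputable def aT (r : ℝ) (k : ℕ) : ℂ := (r : ℂ) ^ (2 * (k + 1))

/-- The factor of the theta product. -/
noncomputable def tT (r : ℝ) (k : ℕ) (z : ℂ) : ℂ := (1 - aT r k * z) * (1 - aT r k / z)

lemma theta1_eq (r : ℝ) (z : ℂ) :
    theta1 r z = thetaConst r * (1 - 1 / z) * ∏' k, tT r k z := rfl

lemma hasProd_zero_of_eq_zero {f : ℕ → ℂ} {i : ℕ} (h : f i = 0) : HasProd f 0 := by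
  have hev : ∀ᶠ s : Finset ℕ in atTop, ∏ j ∈ s, f j = 0 := by
    filter_upwards [Filter.eventually_ge_atTop ({i} : Finset ℕ)] with s hs
    exact Finset.prod_eq_zero (by simpa using hs) h
  exact Filter.Tendsto.congr' (by filter_upwards [hev] with s hs; exact hs.symm)
    tendsto_const_nhds

lemma multipliable_of_summable_sub_one {f : ℕ → ℂ} (h : Summable fun k => f k - 1) :
    Multipliable f := by
  by_cases h0 : ∃ i, f i = 0
  · obtain ⟨i, hi⟩ := h0; exact ⟨0, hasProd_zero_of_eq_zero hi⟩
  push_neg at h0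
  have ht : Filter.Tendsto (fun k => ‖f k - 1‖) atTop (𝓝 0) := by
    simpa using h.tendsto_atTop_zero.norm
  obtain ⟨N, hN⟩ := Filter.eventually_atTop.1
    (ht.eventually_le_const (by norm_num : (0:ℝ) < 1/2))
  have hlog : Summable fun k => Complex.log (f k) := by
    rw [← summable_nat_add_iff N]
    have hb : Summable fun k => (3/2 : ℝ) * ‖f (k + N) - 1‖ :=
      (((summable_nat_add_iff N).2 h).norm).mul_left _
    refine Summable.of_norm_bounded hb fun k => ?_
    have h12 : ‖f (k + N) - 1‖ ≤ 1/2 := hN (k + N) (Nat.le_add_left N k)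
    have := Complex.norm_log_one_add_half_le_self (z := f (k + N) - 1) h12
    simpa using this
  exact Complex.multipliable_of_summable_log hlog

lemma conj_tprod (f : ℕ → ℂ) :
    (starRingEnd ℂ) (∏' k, f k) = ∏' k, (starRingEnd ℂ) (f k) := by
  by_cases h : Multipliable f
  · exact h.map_tprod (starRingEnd ℂ) continuous_conj
  · have h2 : ¬ Multipliable fun k => (starRingEnd ℂ) (f k) := by
      intro hc
      apply h
      have := hc.map (starRingEnd ℂ) continuous_conj
      simpa [Function.comp_def] using this
    rw [tprod_eq_one_of_not_multipliable h, tprod_eq_one_of_not_multipliable h2, map_one]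

variable {r : ℝ}

lemma aT_eq (k : ℕ) : aT r k = (r:ℂ)^(2*k) * (r:ℂ)^2 := by
  simp [aT, mul_add, pow_add]

lemma aT_succ (k : ℕ) : aT r (k+1) = aT r k * (r:ℂ)^2 := by
  simp [aT, mul_add, pow_add]

lemma aT_zero : aT r 0 = (r:ℂ)^2 := by simp [aT]

lemma summable_aT_mul (hr0 : 0 ≤ r) (hr1 : r < 1) (x : ℂ) :
    Summable fun k => aT r k * x := by
  have h : ∀ k, aT r k * x = ((r:ℂ)^2)^k * ((r:ℂ)^2 * x) := by
    intro k
    rw [aT, pow_mul, pow_succ]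
    ring
  rw [funext h]
  apply Summable.mul_right
  apply summable_geometric_of_norm_lt_one
  rw [norm_pow, Complex.norm_real, Real.norm_eq_abs, _root_.abs_of_nonneg hr0]
  nlinarith

lemma multipliable_oneSub (hr0 : 0 ≤ r) (hr1 : r < 1) (x : ℂ) :
    Multipliable fun k => 1 - aT r k * x := by
  apply multipliable_of_summable_sub_one
  have := (summable_aT_mul hr0 hr1 x).neg
  refine this.congr fun k => by ring

lemma multipliable_oneSubDiv (hr0 : 0 ≤ r) (hr1 : r < 1) (x : ℂ) :
    Multipliable fun k => 1 - aT r k / x := by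
  have := multipliable_oneSub hr0 hr1 x⁻¹
  refine this.congr fun k => by rw [div_eq_mul_inv]

lemma multipliable_tT (hr0 : 0 ≤ r) (hr1 : r < 1) (z : ℂ) :
    Multipliable fun k => tT r k z :=
  (multipliable_oneSub hr0 hr1 z).mul (multipliable_oneSubDiv hr0 hr1 z)

lemma norm_aT (hr0 : 0 ≤ r) (k : ℕ) : ‖aT r k‖ = (r^2)^(k+1) := by
  rw [aT, norm_pow, Complex.norm_real, Real.norm_eq_abs, _root_.abs_of_nonneg hr0, pow_mul]

lemma aT_le_one (hr0 : 0 ≤ r) (hr1 : r < 1) (k : ℕ) : ‖aT r k‖ ≤ 1 := by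
  rw [norm_aT hr0]
  exact pow_le_one₀ (by positivity) (by nlinarith)

lemma tT_sub_one_norm (hr0 : 0 ≤ r) (hr1 : r < 1) {z : ℂ} (hz : z ≠ 0) (k : ℕ) :
    ‖tT r k z - 1‖ ≤ (1 + ‖z‖ + ‖z‖⁻¹) * (r^2)^(k+1) := by
  have hexp : tT r k z - 1 = aT r k * (aT r k - z - 1/z) := by
    rw [tT]; field_simp; ring
  rw [hexp, norm_mul, norm_aT hr0]
  rw [mul_comm]
  apply mul_le_mul_of_nonneg_right _ (by positivity)
  calc ‖aT r k - z - 1/z‖ ≤ ‖aT r k - z‖ + ‖1/z‖ := norm_sub_le _ _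
    _ ≤ ‖aT r k‖ + ‖z‖ + ‖1/z‖ := by
        have := norm_sub_le (aT r k) z; linarith
    _ ≤ 1 + ‖z‖ + ‖z‖⁻¹ := by
        have := aT_le_one hr0 hr1 k
        rw [one_div, norm_inv]
        linarith

lemma tT_differentiableAt (r : ℝ) {z : ℂ} (hz : z ≠ 0) (k : ℕ) :
    DifferentiableAt ℂ (fun w => tT r k w) z := by
  refine DifferentiableAt.mul ?_ ?_
  · exact (differentiableAt_const _).sub ((differentiableAt_const _).mul differentiableAt_id)
  · exact (differentiableAt_const _).sub ((differentiableAt_const _).div differentiableAt_id hz)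

set_option maxHeartbeats 1600000 in
/-- Functional equation `ϑ₁(z/r²) = −z ϑ₁(z)`. -/
lemma theta1_fe (hr0 : 0 < r) (hr1 : r < 1) {z : ℂ} (hz : z ≠ 0) :
    theta1 r (z / (r:ℂ)^2) = -z * theta1 r z := by
  have hr0' : (0:ℝ) ≤ r := hr0.le
  have hrC : (r:ℂ) ≠ 0 := by
    simpa using hr0.ne'
  have hr2 : ((r:ℂ)^2) ≠ 0 := pow_ne_zero _ hrC
  by_cases hzr : z = (r:ℂ)^2
  · subst hzr
    rw [div_self hr2]
    have hL : theta1 r 1 = 0 := by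
      rw [theta1_eq]; simp
    have h0 : tT r 0 ((r:ℂ)^2) = 0 := by
      rw [tT]
      rw [aT_zero, div_self hr2]
      simp
    have hR : theta1 r ((r:ℂ)^2) = 0 := by
      rw [theta1_eq, (hasProd_zero_of_eq_zero h0).tprod_eq, mul_zero]
    rw [hL, hR, mul_zero]
  · have hzdr : z / (r:ℂ)^2 ≠ 0 := div_ne_zero hz hr2
    -- A' = (1-z) A
    have hA : (∏' k, (1 - aT r k * (z / (r:ℂ)^2)))
        = (1 - z) * ∏' k, (1 - aT r k * z) := by
      have h1 : (fun k => 1 - aT r k * (z / (r:ℂ)^2)) = fun k => 1 - (r:ℂ)^(2*k) * z := by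
        funext k
        congr 1
        rw [aT_eq]
        field_simp
      have hmul : Multipliable fun k => 1 - (r:ℂ)^(2*(k+1)) * z := by
        have := multipliable_oneSub hr0' hr1 z
        exact this.congr fun k => by rw [aT]
      rw [h1, tprod_eq_zero_mul' hmul]
      norm_num [aT]
    -- B = (1 - r²/z) B'
    have hfac : ∀ k, (1 - aT r (k+1) / z) = (1 - aT r k / (z / (r:ℂ)^2)) := by
      intro k
      congr 1
      rw [div_div_eq_mul_div, aT_succ]
    have hB : (∏' k, (1 - aT r k / z))
        = (1 - (r:ℂ)^2 / z) * ∏' k, (1 - aT r k / (z / (r:ℂ)^2)) := by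
      have hmul : Multipliable fun k => 1 - aT r (k+1) / z := by
        refine (multipliable_oneSubDiv hr0' hr1 (z / (r:ℂ)^2)).congr fun k => ?_
        exact (hfac k).symm
      rw [tprod_eq_zero_mul' hmul, aT_zero]
      exact congrArg _ (tprod_congr hfac)
    have htp1 : (∏' k, tT r k (z / (r:ℂ)^2))
        = (∏' k, (1 - aT r k * (z/(r:ℂ)^2))) * (∏' k, (1 - aT r k / (z/(r:ℂ)^2))) :=
      Multipliable.tprod_mul (multipliable_oneSub hr0' hr1 _) (multipliable_oneSubDiv hr0' hr1 _)
    have htp2 : (∏' k, tT r k z)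
        = (∏' k, (1 - aT r k * z)) * (∏' k, (1 - aT r k / z)) :=
      Multipliable.tprod_mul (multipliable_oneSub hr0' hr1 _) (multipliable_oneSubDiv hr0' hr1 _)
    rw [theta1_eq, theta1_eq, htp1, htp2, hA, hB]
    have hdd : (1:ℂ) / (z / (r:ℂ)^2) = (r:ℂ)^2 / z := one_div_div _ _
    rw [hdd]
    field_simp
    ring

/-- Conjugation symmetry `ϑ₁(z̄) = conj (ϑ₁ z)`. -/
lemma theta1_conj (r : ℝ) (z : ℂ) :
    theta1 r ((starRingEnd ℂ) z) = (starRingEnd ℂ) (theta1 r z) := by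
  rw [theta1_eq, theta1_eq, map_mul, map_mul, conj_tprod]
  have hC : (starRingEnd ℂ) (thetaConst r) = thetaConst r := by
    rw [thetaConst, conj_tprod]
    exact tprod_congr fun k => by
      simp [map_sub, map_pow, Complex.conj_ofReal]
  rw [hC]
  congr 1
  · congr 1
    rw [map_sub, map_one, map_div₀, map_one]
  · exact (tprod_congr fun k => by
      simp [tT, aT, map_mul, map_sub, map_div₀, map_pow, Complex.conj_ofReal]).symm

/-- Differentiability of `ϑ₁` away from 0. -/
lemma theta1_differentiableAt (hr0 : 0 < r) (hr1 : r < 1) {z : ℂ} (hz : z ≠ 0) :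
    DifferentiableAt ℂ (theta1 r) z := by
  have hr0' : (0:ℝ) ≤ r := hr0.le
  have hr2nn : (0:ℝ) ≤ r^2 := by positivity
  have hr2lt : r^2 < 1 := by nlinarith
  set ρ : ℝ := ‖z‖ / 2 with hρdef
  have hρ0 : 0 < ρ := by
    have : 0 < ‖z‖ := norm_pos_iff.2 hz
    positivity
  set B : Set ℂ := Metric.ball z ρ with hBdef
  have hBopen : IsOpen B := Metric.isOpen_ball
  have hzB : z ∈ B := Metric.mem_ball_self hρ0
  have hBprop : ∀ w ∈ B, w ≠ 0 ∧ ρ ≤ ‖w‖ := by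
    intro w hw
    have hd : ‖w - z‖ < ρ := by
      simpa [hBdef, dist_eq_norm] using hw
    have h1 : ‖z‖ - ‖w‖ ≤ ‖w - z‖ := by
      have := norm_sub_norm_le z w
      simpa [norm_sub_rev] using this
    have hl : ρ ≤ ‖w‖ := by
      have h2 : ‖z‖ = 2 * ρ := by rw [hρdef]; ring
      linarith
    refine ⟨?_, hl⟩
    intro h0
    rw [h0, norm_zero] at hl
    linarith
  set K : ℝ := 1 + (‖z‖ + ρ) + ρ⁻¹ with hKdef
  have hK0 : 0 < K := by
    have h1 : 0 < ρ⁻¹ := by positivity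
    have h2 : 0 ≤ ‖z‖ := norm_nonneg _
    rw [hKdef]; positivity
  -- uniform bound on B
  have hK : ∀ w ∈ B, ∀ k, ‖tT r k w - 1‖ ≤ K * (r^2)^(k+1) := by
    intro w hw k
    obtain ⟨hw0, hwl⟩ := hBprop w hw
    have hwu : ‖w‖ ≤ ‖z‖ + ρ := by
      have hd : ‖w - z‖ < ρ := by simpa [hBdef, dist_eq_norm] using hw
      have := norm_sub_norm_le w z
      linarith
    have hb := tT_sub_one_norm hr0' hr1 hw0 k
    refine hb.trans ?_
    apply mul_le_mul_of_nonneg_right _ (by positivity)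
    have hinv : ‖w‖⁻¹ ≤ ρ⁻¹ := by
      apply inv_anti₀ hρ0 hwl
    rw [hKdef]
    linarith
  -- choose N with tail bound ≤ 1/2
  have htend : Filter.Tendsto (fun N : ℕ => K * (r^2)^(N+1)) atTop (𝓝 0) := by
    have h := tendsto_pow_atTop_nhds_zero_of_lt_one hr2nn hr2lt
    have h2 := (h.const_mul K).comp (Filter.tendsto_add_atTop_nat 1)
    simpa [Function.comp_def] using h2
  obtain ⟨N, hN⟩ := Filter.eventually_atTop.1
    (htend.eventually_le_const (by norm_num : (0:ℝ) < 1/2))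
  have hNle : K * (r^2)^(N+1) ≤ 1/2 := hN N le_rfl
  -- the summable majorant for the tail
  set u : ℕ → ℝ := fun k => K * (r^2)^(k+N+1) with hudef
  have hu : Summable u := by
    have h : ∀ k, u k = (K * (r^2)^(N+1)) * (r^2)^k := by
      intro k
      rw [hudef]
      simp only []
      rw [pow_add, pow_add]
      ring
    rw [funext h]
    exact (summable_geometric_of_lt_one hr2nn hr2lt).mul_left _
  have hmono : ∀ k, u k ≤ 1/2 := by
    intro k
    have hple : (r^2)^(k+N+1) ≤ (r^2)^(N+1) :=
      pow_le_pow_of_le_one hr2nn hr2lt.le (by omega)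
    calc u k ≤ K * (r^2)^(N+1) := mul_le_mul_of_nonneg_left hple hK0.le
      _ ≤ 1/2 := hNle
  have htail : ∀ w ∈ B, ∀ k, ‖tT r (k+N) w - 1‖ ≤ u k := by
    intro w hw k
    have := hK w hw (k+N)
    simpa [hudef] using this
  have htail12 : ∀ w ∈ B, ∀ k, ‖tT r (k+N) w - 1‖ ≤ 1/2 := fun w hw k =>
    (htail w hw k).trans (hmono k)
  have htailne : ∀ w ∈ B, ∀ k, tT r (k+N) w ≠ 0 := by
    intro w hw k h0
    have := htail12 w hw k
    rw [h0] at this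
    norm_num at this
  have htailslit : ∀ w ∈ B, ∀ k, tT r (k+N) w ∈ Complex.slitPlane := by
    intro w hw k
    have h := mem_slitPlane_of_norm_lt_one (z := tT r (k+N) w - 1)
      (lt_of_le_of_lt (htail12 w hw k) (by norm_num))
    simpa using h
  -- log bound
  have hlogb : ∀ w ∈ B, ∀ k, ‖Complex.log (tT r (k+N) w)‖ ≤ 3/2 * u k := by
    intro w hw k
    have h := Complex.norm_log_one_add_half_le_self (z := tT r (k+N) w - 1)
      (htail12 w hw k)
    rw [add_sub_cancel] at h
    exact h.trans (by have := htail w hw k; nlinarith)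
  have hlogsummable : ∀ w ∈ B, Summable fun k => Complex.log (tT r (k+N) w) := by
    intro w hw
    exact Summable.of_norm_bounded (hu.mul_left (3/2)) (hlogb w hw)
  -- the tail log-sum is differentiable on B
  have hL : DifferentiableOn ℂ (fun w => ∑' k, Complex.log (tT r (k+N) w)) B := by
    refine differentiableOn_tsum_of_summable_norm (hu.mul_left (3/2)) ?_ hBopen
      (fun k w hw => hlogb w hw k)
    intro k
    intro w hw
    exact ((tT_differentiableAt r (hBprop w hw).1 (k+N)).differentiableWithinAt).clog
      (htailslit w hw k)
  -- on B, theta1 agrees with an explicitly differentiable function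
  have heq : ∀ w ∈ B, theta1 r w
      = thetaConst r * (1 - 1/w) * ((∏ k ∈ Finset.range N, tT r k w)
        * Complex.exp (∑' k, Complex.log (tT r (k+N) w))) := by
    intro w hw
    have hmul : Multipliable fun k => tT r (k+N) w :=
      Complex.multipliable_of_summable_log (hlogsummable w hw)
    have hexp : Complex.exp (∑' k, Complex.log (tT r (k+N) w))
        = ∏' k, tT r (k+N) w := by
      have h := Complex.cexp_tsum_eq_tprod (fun k => htailne w hw k) (hlogsummable w hw)
      exact h
    have hsplit := Multipliable.prod_mul_tprod_nat_mul' (f := fun k => tT r k w) (k := N) hmul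
    rw [theta1_eq, ← hsplit, hexp]
  have hev : theta1 r =ᶠ[𝓝 z] fun w => thetaConst r * (1 - 1/w)
      * ((∏ k ∈ Finset.range N, tT r k w)
        * Complex.exp (∑' k, Complex.log (tT r (k+N) w))) := by
    filter_upwards [hBopen.mem_nhds hzB] with w hw using heq w hw
  rw [Filter.EventuallyEq.differentiableAt_iff hev]
  apply DifferentiableAt.mul
  · exact (differentiableAt_const _).mul
      ((differentiableAt_const _).sub ((differentiableAt_const _).div differentiableAt_id hz))
  apply DifferentiableAt.mul
  · exact DifferentiableAt.fun_finsetProd fun k _ => tT_differentiableAt r hz k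
  · exact ((hL.differentiableAt (hBopen.mem_nhds hzB))).cexp

lemma hasDerivAt_conj_comp {f : ℂ → ℂ} {d x : ℂ} (hf : HasDerivAt f d x) :
    HasDerivAt (fun z => (starRingEnd ℂ) (f ((starRingEnd ℂ) z)))
      ((starRingEnd ℂ) d) ((starRingEnd ℂ) x) := by
  rw [hasDerivAt_iff_isLittleO] at hf ⊢
  have hconj : Filter.Tendsto (fun y : ℂ => (starRingEnd ℂ) y)
      (𝓝 ((starRingEnd ℂ) x)) (𝓝 x) := by
    have := continuous_conj.tendsto ((starRingEnd ℂ) x)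
    simpa using this
  have h1 := hf.comp_tendsto hconj
  rw [Asymptotics.isLittleO_iff] at h1 ⊢
  intro c hc
  filter_upwards [h1 hc] with y hy
  have hnorm1 : ‖(starRingEnd ℂ) (f ((starRingEnd ℂ) y))
      - (starRingEnd ℂ) (f ((starRingEnd ℂ) ((starRingEnd ℂ) x)))
      - (y - (starRingEnd ℂ) x) • (starRingEnd ℂ) d‖
      = ‖f ((starRingEnd ℂ) y) - f x - ((starRingEnd ℂ) y - x) • d‖ := by
    rw [show (starRingEnd ℂ) (f ((starRingEnd ℂ) y))
        - (starRingEnd ℂ) (f ((starRingEnd ℂ) ((starRingEnd ℂ) x)))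
        - (y - (starRingEnd ℂ) x) • (starRingEnd ℂ) d
        = (starRingEnd ℂ) (f ((starRingEnd ℂ) y) - f x - ((starRingEnd ℂ) y - x) • d) by
      simp [map_sub, map_mul, smul_eq_mul, Complex.conj_conj]]
    exact RCLike.norm_conj _
  have hnorm2 : ‖y - (starRingEnd ℂ) x‖ = ‖(starRingEnd ℂ) y - x‖ := by
    rw [show (starRingEnd ℂ) y - x = (starRingEnd ℂ) (y - (starRingEnd ℂ) x) by
      simp [map_sub, Complex.conj_conj]]
    exact (RCLike.norm_conj _).symm
  rw [hnorm1, hnorm2]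
  simpa using hy

/-- `ϑ₁'(z̄) = conj (ϑ₁' z)`. -/
lemma deriv_theta1_conj (hr0 : 0 < r) (hr1 : r < 1) {z : ℂ} (hz : z ≠ 0) :
    deriv (theta1 r) ((starRingEnd ℂ) z) = (starRingEnd ℂ) (deriv (theta1 r) z) := by
  have hd := (theta1_differentiableAt hr0 hr1 hz).hasDerivAt
  have h2 := hasDerivAt_conj_comp hd
  have hfun : (fun w => (starRingEnd ℂ) (theta1 r ((starRingEnd ℂ) w))) = theta1 r := by
    funext w
    rw [theta1_conj, Complex.conj_conj]
  rw [hfun] at h2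
  exact h2.deriv

/-- derivative of the functional equation. -/
lemma deriv_theta1_fe (hr0 : 0 < r) (hr1 : r < 1) {s : ℂ} (hs : s ≠ 0) :
    deriv (theta1 r) (s / (r:ℂ)^2)
      = -(r:ℂ)^2 * theta1 r s - (r:ℂ)^2 * s * deriv (theta1 r) s := by
  have hrC : (r:ℂ) ≠ 0 := by simpa using hr0.ne'
  have hr2 : ((r:ℂ)^2) ≠ 0 := pow_ne_zero _ hrC
  have hsr : s / (r:ℂ)^2 ≠ 0 := div_ne_zero hs hr2
  have hθ := (theta1_differentiableAt hr0 hr1 hsr).hasDerivAt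
  have hdiv : HasDerivAt (fun w : ℂ => w / (r:ℂ)^2) (((r:ℂ)^2)⁻¹) s := by
    simpa using (hasDerivAt_id s).div_const ((r:ℂ)^2)
  have hg : HasDerivAt (fun w => theta1 r (w / (r:ℂ)^2))
      (deriv (theta1 r) (s/(r:ℂ)^2) * ((r:ℂ)^2)⁻¹) s :=
    by have := HasDerivAt.comp s hθ hdiv; exact this
  have hh : HasDerivAt (fun w => -w * theta1 r w)
      (-1 * theta1 r s + -s * deriv (theta1 r) s) s :=
    (hasDerivAt_id s).neg.mul (theta1_differentiableAt hr0 hr1 hs).hasDerivAt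
  have heq : (fun w => -w * theta1 r w) =ᶠ[𝓝 s] fun w => theta1 r (w / (r:ℂ)^2) := by
    filter_upwards [isOpen_compl_singleton.mem_nhds (by simpa using hs :
      s ∈ ({0}ᶜ : Set ℂ))] with w hw
    exact (theta1_fe hr0 hr1 (by simpa using hw)).symm
  have huniq : deriv (theta1 r) (s/(r:ℂ)^2) * ((r:ℂ)^2)⁻¹
      = -1 * theta1 r s + -s * deriv (theta1 r) s :=
    HasDerivAt.unique hg (hh.congr_of_eventuallyEq heq.symm)
  have h3 : deriv (theta1 r) (s/(r:ℂ)^2)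
      = (-1 * theta1 r s + -s * deriv (theta1 r) s) * (r:ℂ)^2 := by
    rw [← huniq]
    field_simp
  rw [h3]
  ring

lemma alg_key (cz cv z0 cX cY cT cD w : ℂ) (hcz : cz ≠ 0) (hcv : cv ≠ 0) (hz0 : z0 ≠ 0)
    (hX : cX ≠ 0) (hT : cT ≠ 0) (hw : w ≠ 0) :
    w * cY / cX - (-(w*cz) * cT - (w*cz) * (z0*cz) * cD)/(w * (-(z0*cz)*cT))
      + (cz * cD / cT - (-(w*cz)*cX - (w*cz)*((w*cz)*cv)*cY)/(cz * (-((w*cz)*cv)*cX)))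
      = -1/z0 - 1/(cv*cz) := by
  have t2 : (-(w*cz) * cT - (w*cz) * (z0*cz) * cD)/(w * (-(z0*cz)*cT))
      = 1/z0 + cz * cD / cT := by
    rw [div_eq_iff (by simp [hw, hz0, hcz, hT])]
    field_simp
    ring
  have t4 : (-(w*cz)*cX - (w*cz)*((w*cz)*cv)*cY)/(cz * (-((w*cz)*cv)*cX))
      = 1/(cv*cz) + w * cY / cX := by
    rw [div_eq_iff (by simp [hw, hz0, hcz, hT, hcv, hX])]
    field_simp
    ring
  rw [t2, t4]
  ring

end Stmt14Aux

theorem stmt14 (r : ℝ) (hr0 : 0 < r) (hr1 : r < 1)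
    (z₀ : ℂ) (hz₀l : r < ‖z₀‖) (hz₀u : ‖z₀‖ < 1) :
    (∀ z : ℂ, z ≠ 0 →
      theta1 r ((starRingEnd ℂ) z₀ * z) ≠ 0 → theta1 r (z₀ / z) ≠ 0 →
      theta1 r ((starRingEnd ℂ) z₀ * ((r : ℂ) ^ 2 / (starRingEnd ℂ) z)) ≠ 0 →
      theta1 r (z₀ / ((r : ℂ) ^ 2 / (starRingEnd ℂ) z)) ≠ 0 →
      pfun r z₀ ((r : ℂ) ^ 2 / (starRingEnd ℂ) z) + (starRingEnd ℂ) (pfun r z₀ z)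
        = -1 / z₀ - 1 / (starRingEnd ℂ) z₀) ∧
    ∀ z : ℂ, ‖z‖ = r →
      theta1 r ((starRingEnd ℂ) z₀ * z) ≠ 0 → theta1 r (z₀ / z) ≠ 0 →
      (pfun r z₀ z).re = (-1 / z₀ : ℂ).re := by
  classical
  open Stmt14Aux in
  have hr0' : (0:ℝ) ≤ r := hr0.le
  have hrC : (r:ℂ) ≠ 0 := by simpa using hr0.ne'
  have hr2 : ((r:ℂ)^2) ≠ 0 := pow_ne_zero _ hrC
  have hz₀ : z₀ ≠ 0 := by
    intro h
    rw [h, norm_zero] at hz₀l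
    linarith
  have hcz₀ : (starRingEnd ℂ) z₀ ≠ 0 := by simpa using hz₀
  have key : ∀ z : ℂ, z ≠ 0 →
      theta1 r ((starRingEnd ℂ) z₀ * z) ≠ 0 → theta1 r (z₀ / z) ≠ 0 →
      pfun r z₀ ((r : ℂ) ^ 2 / (starRingEnd ℂ) z) + (starRingEnd ℂ) (pfun r z₀ z)
        = -1 / z₀ - 1 / (starRingEnd ℂ) z₀ := by
    intro z hz h1 h2
    have hcz : (starRingEnd ℂ) z ≠ 0 := by simpa using hz
    set w : ℂ := (r:ℂ)^2 / (starRingEnd ℂ) z with hw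
    have hwne : w ≠ 0 := div_ne_zero hr2 hcz
    set u : ℂ := (starRingEnd ℂ) z₀ * z with hu
    set v : ℂ := z₀ / z with hv
    have hune : u ≠ 0 := mul_ne_zero hcz₀ hz
    have hvne : v ≠ 0 := div_ne_zero hz₀ hz
    have hr2v : (r:ℂ)^2 * v ≠ 0 := mul_ne_zero hr2 hvne
    have hcu : (starRingEnd ℂ) u ≠ 0 := by simpa using hune
    -- point identifications
    have hP1 : (starRingEnd ℂ) z₀ * w = (starRingEnd ℂ) ((r:ℂ)^2 * v) := by
      rw [hw, hv, map_mul, map_div₀, map_pow, Complex.conj_ofReal]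
      field_simp
    have hP2 : z₀ / w = (starRingEnd ℂ) u / (r:ℂ)^2 := by
      rw [hw, hu, map_mul, Complex.conj_conj]
      field_simp
    -- values of theta and deriv theta at the two w-points
    have F1 : theta1 r ((starRingEnd ℂ) z₀ * w)
        = (starRingEnd ℂ) (theta1 r ((r:ℂ)^2 * v)) := by
      rw [hP1, theta1_conj]
    have F2 : deriv (theta1 r) ((starRingEnd ℂ) z₀ * w)
        = (starRingEnd ℂ) (deriv (theta1 r) ((r:ℂ)^2 * v)) := by
      rw [hP1, deriv_theta1_conj hr0 hr1 hr2v]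
    have F3 : theta1 r (z₀ / w)
        = -(starRingEnd ℂ) u * (starRingEnd ℂ) (theta1 r u) := by
      rw [hP2, theta1_fe hr0 hr1 hcu, theta1_conj]
    have F4 : deriv (theta1 r) (z₀ / w)
        = -(r:ℂ)^2 * (starRingEnd ℂ) (theta1 r u)
          - (r:ℂ)^2 * (starRingEnd ℂ) u * (starRingEnd ℂ) (deriv (theta1 r) u) := by
      rw [hP2, deriv_theta1_fe hr0 hr1 hcu, theta1_conj, deriv_theta1_conj hr0 hr1 hune]
    -- relations between values at v and r²v
    have hcancel : (r:ℂ)^2 * v / (r:ℂ)^2 = v := by field_simp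
    have e1 : theta1 r v = -((r:ℂ)^2 * v) * theta1 r ((r:ℂ)^2 * v) := by
      have := theta1_fe hr0 hr1 hr2v
      rwa [hcancel] at this
    have e2 : deriv (theta1 r) v
        = -(r:ℂ)^2 * theta1 r ((r:ℂ)^2 * v)
          - (r:ℂ)^2 * ((r:ℂ)^2 * v) * deriv (theta1 r) ((r:ℂ)^2 * v) := by
      have := deriv_theta1_fe hr0 hr1 hr2v
      rwa [hcancel] at this
    have hXne : theta1 r ((r:ℂ)^2 * v) ≠ 0 := by
      intro h0
      rw [h0, mul_zero] at e1
      exact h2 e1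
    -- conjugated relations
    have ce1 : (starRingEnd ℂ) (theta1 r v)
        = -((r:ℂ)^2 * (starRingEnd ℂ) v) * (starRingEnd ℂ) (theta1 r ((r:ℂ)^2 * v)) := by
      rw [e1]
      simp [map_mul, map_neg, map_pow, Complex.conj_ofReal]
    have ce2 : (starRingEnd ℂ) (deriv (theta1 r) v)
        = -(r:ℂ)^2 * (starRingEnd ℂ) (theta1 r ((r:ℂ)^2 * v))
          - (r:ℂ)^2 * ((r:ℂ)^2 * (starRingEnd ℂ) v)
            * (starRingEnd ℂ) (deriv (theta1 r) ((r:ℂ)^2 * v)) := by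
      rw [e2]
      simp [map_sub, map_mul, map_neg, map_pow, Complex.conj_ofReal]
    -- abbreviations for the conjugated unknowns
    set cX : ℂ := (starRingEnd ℂ) (theta1 r ((r:ℂ)^2 * v)) with hcX
    set cY : ℂ := (starRingEnd ℂ) (deriv (theta1 r) ((r:ℂ)^2 * v)) with hcY
    set cT : ℂ := (starRingEnd ℂ) (theta1 r u) with hcT
    set cD : ℂ := (starRingEnd ℂ) (deriv (theta1 r) u) with hcD
    have hcXne : cX ≠ 0 := by simpa [hcX] using hXne
    have hcTne : cT ≠ 0 := by simpa [hcT] using h1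
    have hcuval : (starRingEnd ℂ) u = z₀ * (starRingEnd ℂ) z := by
      rw [hu, map_mul, Complex.conj_conj]
    have hcvval : (starRingEnd ℂ) v = (starRingEnd ℂ) z₀ / (starRingEnd ℂ) z := by
      rw [hv, map_div₀]
    -- expand pfun
    rw [pfun, pfun]
    rw [F1, F2, F3, F4]
    simp only [map_sub, map_div₀, map_mul, Complex.conj_conj]
    rw [← hcT, ← hcD, ce1, ce2]
    have hcvne : (starRingEnd ℂ) v ≠ 0 := by simpa using hvne
    have hr2w : (r:ℂ)^2 = w * (starRingEnd ℂ) z := by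
      rw [hw]
      field_simp
    have hcz0v : (starRingEnd ℂ) z₀ = (starRingEnd ℂ) v * (starRingEnd ℂ) z := by
      rw [hv, map_div₀]
      field_simp
    rw [hcuval, hr2w, hcz0v]
    exact alg_key ((starRingEnd ℂ) z) ((starRingEnd ℂ) v) z₀ cX cY cT cD w
      hcz hcvne hz₀ hcXne hcTne hwne
  refine ⟨fun z hz h1 h2 _ _ => key z hz h1 h2, ?_⟩
  intro z hzn h1 h2
  have hz : z ≠ 0 := by
    intro h
    rw [h, norm_zero] at hzn
    exact hr0.ne hzn
  have hcz : (starRingEnd ℂ) z ≠ 0 := by simpa using hz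
  have hkey : (r:ℂ)^2 / (starRingEnd ℂ) z = z := by
    have hzz : z * (starRingEnd ℂ) z = (r:ℂ)^2 := by
      rw [Complex.mul_conj]
      rw [Complex.normSq_eq_norm_sq, hzn]
      push_cast
      ring
    rw [div_eq_iff hcz, ← hzz]
  have hmain := key z hz h1 h2
  rw [hkey] at hmain
  have h5 : (1:ℂ) / (starRingEnd ℂ) z₀ = (starRingEnd ℂ) (1 / z₀) := by
    rw [map_div₀, map_one]
  have hre := congrArg Complex.re hmain
  rw [h5] at hre
  simp only [Complex.add_re, Complex.sub_re, Complex.conj_re] at hre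
  have h7 : (-1/z₀ : ℂ).re = -(1/z₀ : ℂ).re := by rw [neg_div, Complex.neg_re]
  rw [h7] at hre ⊢
  linarith
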